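/- arXiv:2112.11310 — 3 statements merged into one kernel-verified Lean document; each statement's English description precedes it below -/
import Mathlib

section
/- Let X be a nonempty set and let g, g₁ ∈ G(X) with ⋏(g) > 1. Then: (i) g ≈ g^c g ≈ g g^c ≈ g g^l g ≈ g g^r g and g^r g g^l ≈ g^r g^c g^l; (ii) the classes [g g^r], [g g^l], [g^r g], [g^l g] are idempotents of FT¹(X); (iii) g₁ ≈ β₁(g₁). -/
/-! Common definitions: the construction of `G(X)`, words, the congruence `ρ`,
the monoid `FT¹(X)`, landscapes, mountains, the maps `β₁, β₂, β`, Green's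
relations, sandwich sets, etc. -/

/-- Nested triples over `X` together with the extra symbol `1`. -/
inductive PreG (X : Type) : Type where
  | one : PreG X
  | base : X → PreG X
  | node : PreG X → PreG X → PreG X → PreG X

namespace PreG

variable {X : Type}

/-- The height `⋏(g)`. -/
def ht : PreG X → ℕ
  | one => 0
  | base _ => 1
  | node l _ _ => ht l + 1

/-- The left entry `g^l` (with `1^l = 1` and `x^l = 1` for `x ∈ X`). -/
def left : PreG X → PreG X
  | one => one
  | base _ => one
  | node l _ _ => l

/-- The right entry `g^r`. -/
def right : PreG X → PreG X
  | one => one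
  | base _ => one
  | node _ _ r => r

/-- The central entry `g^c` (with `x^c = x` for `x ∈ X` via `x = (1,x,1)`). -/
def center : PreG X → PreG X
  | one => one
  | base x => base x
  | node _ c _ => c

/-- Membership in `G(X) = ⋃_{i≥0} G_i(X)`. -/
inductive IsG : PreG X → Prop
  | one : IsG one
  | base (x : X) : IsG (base x)
  | node {l c r : PreG X} :
      IsG l → IsG c → IsG r →
      1 ≤ l.ht → l.ht = r.ht → c.ht + 1 = l.ht →
      l ≠ r →
      (c = l.left ∨ c = l.right) →
      (c = r.left ∨ c = r.right) →
      IsG (node l c r)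

theorem IsG.left_isG {g : PreG X} (h : g.IsG) : g.left.IsG := by
  cases h with
  | one => exact .one
  | base x => exact .one
  | node hl hc hr h1 h2 h3 h4 h5 h6 => exact hl

theorem IsG.right_isG {g : PreG X} (h : g.IsG) : g.right.IsG := by
  cases h with
  | one => exact .one
  | base x => exact .one
  | node hl hc hr h1 h2 h3 h4 h5 h6 => exact hr

theorem IsG.center_isG {g : PreG X} (h : g.IsG) : g.center.IsG := by
  cases h with
  | one => exact .one
  | base x => exact .base x
  | node hl hc hr h1 h2 h3 h4 h5 h6 => exact hc

/-- The ground `ε(g)`. -/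
def ground : PreG X → Set (PreG X)
  | one => {one}
  | base x => {one, base x}
  | node l c r => ground l ∪ {node l c r} ∪ ground r

end PreG

/-- The set `G(X)`. -/
def Gx (X : Type) : Type := {g : PreG X // g.IsG}

namespace Gx

variable {X : Type}

/-- The letter `1`. -/
def gone : Gx X := ⟨PreG.one, .one⟩

instance : Inhabited (Gx X) := ⟨gone⟩

/-- The letter corresponding to `x ∈ X`. -/
def ofX (x : X) : Gx X := ⟨PreG.base x, .base x⟩

/-- `g^l`. -/
def l (g : Gx X) : Gx X := ⟨g.1.left, g.2.left_isG⟩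

/-- `g^c`. -/
def c (g : Gx X) : Gx X := ⟨g.1.center, g.2.center_isG⟩

/-- `g^r`. -/
def r (g : Gx X) : Gx X := ⟨g.1.right, g.2.right_isG⟩

/-- The height of `g`. -/
def ht (g : Gx X) : ℕ := g.1.ht

theorem ht_c_lt : ∀ {g : Gx X}, 2 ≤ g.ht → g.c.ht < g.ht := by
  rintro ⟨g0, hg⟩ h
  cases hg with
  | one => simp [Gx.ht, PreG.ht] at h
  | base x => simp [Gx.ht, PreG.ht] at h
  | node hl hc hr hht hlr hc1 hne hcl hcr =>
    simp only [Gx.ht, Gx.c, PreG.center, PreG.ht] at *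
    omega

/-- The step relation of an uphill: `a ∈ {b^l, b^r}` for consecutive letters `a b`. -/
def stepUp (a b : Gx X) : Prop := a = b.l ∨ a = b.r

/-- The step relation of a downhill: `b ∈ {a^l, a^r}` for consecutive letters `a b`. -/
def stepDown (a b : Gx X) : Prop := b = a.l ∨ b = a.r

/-- The left hill `λ_l(g)` of the mountain `β₁(g)`. -/
def lamL (g : Gx X) : List (Gx X) :=
  if h : 2 ≤ g.ht then lamL g.c ++ [g.l, g]
  else if g.ht = 0 then [g] else [gone, g]
termination_by g.ht
decreasing_by exact ht_c_lt h

/-- The right hill `λ_r(g)` of the mountain `β₁(g)`. -/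
def lamR (g : Gx X) : List (Gx X) :=
  if h : 2 ≤ g.ht then [g, g.r] ++ lamR g.c
  else if g.ht = 0 then [g] else [g, gone]
termination_by g.ht
decreasing_by exact ht_c_lt h

end Gx

/-- The free semigroup `G(X)⁺` on `G(X)`. -/
abbrev Wd (X : Type) := FreeSemigroup (Gx X)

namespace Wd

variable {X : Type}

/-- The one-letter word. -/
def og (g : Gx X) : Wd X := FreeSemigroup.of g

/-- The list of letters of a word. -/
def toL (w : Wd X) : List (Gx X) := w.head :: w.tail

/-- The word with a given (nonempty) list of letters. -/
def ofL (w : List (Gx X)) : Wd X := ⟨w.headI, w.tail⟩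

end Wd

/-- The generating relation `ρ_e ∪ ρ_s`. -/
def rhoBase (X : Type) : Wd X → Wd X → Prop := fun a b =>
  (∃ g : Gx X,
     (a = Wd.og Gx.gone * Wd.og g ∧ b = Wd.og g) ∨
     (a = Wd.og g * Wd.og Gx.gone ∧ b = Wd.og g) ∨
     (a = Wd.og g * Wd.og g ∧ b = Wd.og g)) ∨
  (∃ g : Gx X, 2 ≤ g.ht ∧
     ((a = Wd.og g.c * Wd.og g.l * Wd.og g ∧ b = Wd.og g) ∨
      (a = Wd.og g * Wd.og g.r * Wd.og g.c ∧ b = Wd.og g) ∨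
      (a = Wd.og g.r * Wd.og g.c * Wd.og g * Wd.og g.c * Wd.og g.l ∧
       b = Wd.og g.r * Wd.og g.c * Wd.og g.l)))

/-- The congruence `ρ`: the smallest congruence containing `ρ_e ∪ ρ_s`. -/
def rho (X : Type) : Con (Wd X) := conGen (rhoBase X)

/-- The monoid `FT¹(X) = G(X)⁺/ρ`. -/
abbrev FT1 (X : Type) := (rho X).Quotient

/-- The `ρ`-class `[u]` of a word `u`. -/
def cls {X : Type} (u : Wd X) : FT1 X := (u : FT1 X)

/-- `FT(X) = FT¹(X) ∖ {[1]}`, as a subset of `FT¹(X)`. -/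
def FTset (X : Type) : Set (FT1 X) := {a | a ≠ cls (Wd.og Gx.gone)}

section Landscapes

variable {X : Type}

/-- Landscapes (as nonempty lists of letters). -/
def IsLandL (w : List (Gx X)) : Prop :=
  w ≠ [] ∧ w.Chain' (fun a b => Gx.stepUp a b ∨ Gx.stepDown a b)

/-- Uphills. -/
def IsUphillL (w : List (Gx X)) : Prop := w ≠ [] ∧ w.Chain' Gx.stepUp

/-- Downhills. -/
def IsDownhillL (w : List (Gx X)) : Prop := w ≠ [] ∧ w.Chain' Gx.stepDown

/-- No letter is a river. -/
def RiverFreeL : List (Gx X) → Prop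
  | a :: b :: c :: t =>
      ¬(a.ht = b.ht + 1 ∧ c.ht = b.ht + 1) ∧ RiverFreeL (b :: c :: t)
  | _ => True

/-- Mountains: landscapes with endpoints `1` and no rivers. -/
def IsMountainL (w : List (Gx X)) : Prop :=
  IsLandL w ∧ w.head? = some Gx.gone ∧ w.getLast? = some Gx.gone ∧ RiverFreeL w

/-- The set `M¹(X)` of all mountains. -/
def MSet (X : Type) : Set (List (Gx X)) := {w | IsMountainL w}

/-- `u * v`: concatenation merging the repeated junction letter. -/
def mergeL (u v : List (Gx X)) : List (Gx X) := u ++ v.tail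

open Classical in
/-- The maximal initial uphill `λ_l` of a landscape. -/
noncomputable def maxUp : List (Gx X) → List (Gx X)
  | a :: b :: t => if Gx.stepUp a b then a :: maxUp (b :: t) else [a]
  | w => w

/-- The maximal final downhill `λ_r` of a landscape. -/
noncomputable def lamRL (w : List (Gx X)) : List (Gx X) := (maxUp w.reverse).reverse

/-- The peak `κ` of a mountain. -/
noncomputable def peakL (w : List (Gx X)) : Gx X := (maxUp w).getLast?.getD Gx.gone

/-- `β₁` on a letter: the mountain `λ_l(g) * λ_r(g)`. -/
def beta1g (g : Gx X) : List (Gx X) := mergeL (Gx.lamL g) (Gx.lamR g)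

/-- `β₁` on a word: `β₁(g₀) * ⋯ * β₁(g_n)`. -/
def beta1L : List (Gx X) → List (Gx X)
  | [] => []
  | [g] => beta1g g
  | g :: t => mergeL (beta1g g) (beta1L t)

/-- One uplifting of a river. -/
def UpStep (u v : List (Gx X)) : Prop :=
  ∃ (p s : List (Gx X)) (a b c : Gx X),
    u = p ++ a :: b :: c :: s ∧ a.ht = b.ht + 1 ∧ c.ht = b.ht + 1 ∧
    ((a = c ∧ v = p ++ a :: s) ∨
     (a ≠ c ∧ ∃ d : Gx X, d.1 = PreG.node c.1 b.1 a.1 ∧ v = p ++ a :: d :: c :: s))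

/-- The reflexive and transitive closure `→*` of uplifting of rivers. -/
def UpStar : List (Gx X) → List (Gx X) → Prop := Relation.ReflTransGen UpStep

open Classical in
/-- `β₂(u)`: the unique landscape with no rivers reachable from `u` by
upliftings of rivers. -/
noncomputable def beta2L (u : List (Gx X)) : List (Gx X) :=
  if h : ∃ v, UpStar u v ∧ RiverFreeL v ∧ IsLandL v then h.choose else u

/-- `β(u) = β₂(β₁(u))`. -/
noncomputable def betaL (u : List (Gx X)) : List (Gx X) := beta2L (beta1L u)

/-- The operation `⊙` on mountains: `u ⊙ v = β₂(u * v)`. -/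
noncomputable def odotL (u v : List (Gx X)) : List (Gx X) := beta2L (mergeL u v)

/-- Valleys: a downhill followed by an uphill (junction merged). -/
def IsValleyL (w : List (Gx X)) : Prop :=
  ∃ d u : List (Gx X), IsDownhillL d ∧ IsUphillL u ∧ d.getLast? = u.head? ∧
    w = mergeL d u

/-- Canyons: valleys with equal endpoints. -/
def IsCanyonL (w : List (Gx X)) : Prop := IsValleyL w ∧ w.head? = w.getLast?

/-- Gorges: canyons `w` with `w →* σ(w)`. -/
def IsGorgeL (w : List (Gx X)) : Prop :=
  IsCanyonL w ∧ ∃ a, w.head? = some a ∧ UpStar w [a]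

end Landscapes

section Green

variable {X : Type}

/-- `a ≤_R b`. -/
def leR (a b : FT1 X) : Prop := ∃ m, a = b * m

/-- `a ≤_L b`. -/
def leL (a b : FT1 X) : Prop := ∃ m, a = m * b

/-- `a ≤_J b`. -/
def leJ (a b : FT1 X) : Prop := ∃ m n, a = m * b * n

/-- The right ideal `aM`. -/
def rSet (a : FT1 X) : Set (FT1 X) := {x | ∃ m, x = a * m}

/-- The left ideal `Ma`. -/
def lSet (a : FT1 X) : Set (FT1 X) := {x | ∃ m, x = m * a}

/-- The two-sided ideal `MaM`. -/
def jSet (a : FT1 X) : Set (FT1 X) := {x | ∃ m n, x = m * a * n}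

/-- Green's relation `R`. -/
def GreenR (a b : FT1 X) : Prop := rSet a = rSet b

/-- Green's relation `L`. -/
def GreenL (a b : FT1 X) : Prop := lSet a = lSet b

/-- Green's relation `J`. -/
def GreenJ (a b : FT1 X) : Prop := jSet a = jSet b

/-- Green's relation `H = L ∩ R`. -/
def GreenH (a b : FT1 X) : Prop := GreenR a b ∧ GreenL a b

/-- Green's relation `D = L ∨ R` (join as equivalence relations). -/
def GreenD : FT1 X → FT1 X → Prop :=
  Relation.EqvGen (fun a b => GreenL a b ∨ GreenR a b)

/-- The natural partial order on a regular semigroup: `s ≤ t` iff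
`s = et = tf` for some idempotents `e`, `f`. -/
def natLe (s t : FT1 X) : Prop :=
  ∃ e f : FT1 X, e * e = e ∧ f * f = f ∧ s = e * t ∧ s = t * f

end Green

/-- The sandwich set `S(e, f)`. -/
def sandwich {S : Type*} [Mul S] (e f : S) : Set S :=
  {h | h * h = h ∧ f * h = h ∧ h * e = h ∧ e * h * f = e * f}

/-- Skeleton mappings `φ : G(X) → E(S¹)`. -/
def IsSkeletonMap {X : Type} {S : Type} [Semigroup S] (φ : Gx X → WithOne S) : Prop :=
  (Function.Injective fun x : X => φ (Gx.ofX x)) ∧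
  (∀ x : X, ∃ s : S, s * s = s ∧ φ (Gx.ofX x) = (s : WithOne S)) ∧
  (∀ g : Gx X, φ g * φ g = φ g) ∧
  (∀ g : Gx X, g.ht = 1 → φ Gx.gone * φ g = φ g ∧ φ g * φ Gx.gone = φ g) ∧
  (∀ g : Gx X, 2 ≤ g.ht → φ g ∈ sandwich (φ g.r * φ g.c) (φ g.c * φ g.l))

section Aux

variable {X : Type}

theorem baseEq {u v : Wd X} (h : rhoBase X u v) : cls u = cls v :=
  ((rho X).eq).2 (ConGen.Rel.of _ _ h)

/-- shorthand -/
def eg (g : Gx X) : FT1 X := cls (Wd.og g)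

theorem egL1 (g : Gx X) : eg Gx.gone * eg g = eg g :=
  baseEq (Or.inl ⟨g, Or.inl ⟨rfl, rfl⟩⟩)

theorem egL2 (g : Gx X) : eg g * eg Gx.gone = eg g :=
  baseEq (Or.inl ⟨g, Or.inr (Or.inl ⟨rfl, rfl⟩)⟩)

theorem egL3 (g : Gx X) : eg g * eg g = eg g :=
  baseEq (Or.inl ⟨g, Or.inr (Or.inr ⟨rfl, rfl⟩)⟩)

theorem egL4 (g : Gx X) (h : 2 ≤ g.ht) : eg g.c * eg g.l * eg g = eg g :=
  baseEq (Or.inr ⟨g, h, Or.inl ⟨rfl, rfl⟩⟩)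

theorem egL5 (g : Gx X) (h : 2 ≤ g.ht) : eg g * eg g.r * eg g.c = eg g :=
  baseEq (Or.inr ⟨g, h, Or.inr (Or.inl ⟨rfl, rfl⟩)⟩)

theorem egL6 (g : Gx X) (h : 2 ≤ g.ht) :
    eg g.r * eg g.c * eg g * eg g.c * eg g.l = eg g.r * eg g.c * eg g.l :=
  baseEq (Or.inr ⟨g, h, Or.inr (Or.inr ⟨rfl, rfl⟩)⟩)

theorem egDcg (g : Gx X) (h : 2 ≤ g.ht) : eg g.c * eg g = eg g := by
  conv_lhs => rw [← egL4 g h]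
  simp only [← mul_assoc]
  rw [egL3 g.c]
  exact egL4 g h

theorem egDgc (g : Gx X) (h : 2 ≤ g.ht) : eg g * eg g.c = eg g := by
  conv_lhs => rw [← egL5 g h]
  simp only [mul_assoc]
  rw [egL3 g.c]
  simp only [← mul_assoc]
  exact egL5 g h

theorem egDglg (g : Gx X) (h : 2 ≤ g.ht) : eg g * eg g.l * eg g = eg g := by
  have lhs : eg g * (eg g.r * eg g.c * eg g * eg g.c * eg g.l) * eg g = eg g := by
    calc eg g * (eg g.r * eg g.c * eg g * eg g.c * eg g.l) * eg g
        = (eg g * eg g.r * eg g.c) * eg g * (eg g.c * eg g.l * eg g) := by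
          simp only [mul_assoc]
      _ = eg g := by rw [egL5 g h, egL4 g h, egL3 g, egL3 g]
  have rhs : eg g * (eg g.r * eg g.c * eg g.l) * eg g = eg g * eg g.l * eg g := by
    calc eg g * (eg g.r * eg g.c * eg g.l) * eg g
        = (eg g * eg g.r * eg g.c) * (eg g.l * eg g) := by simp only [mul_assoc]
      _ = eg g * (eg g.l * eg g) := by rw [egL5 g h]
      _ = eg g * eg g.l * eg g := by rw [mul_assoc]
  have key : eg g * (eg g.r * eg g.c * eg g * eg g.c * eg g.l) * eg g
      = eg g * (eg g.r * eg g.c * eg g.l) * eg g := by rw [egL6 g h]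
  rw [lhs, rhs] at key
  exact key.symm

theorem egDgrg (g : Gx X) (h : 2 ≤ g.ht) : eg g * eg g.r * eg g = eg g := by
  have step : eg g.r * eg g = eg g.r * (eg g.c * eg g.l * eg g) := by rw [egL4 g h]
  calc eg g * eg g.r * eg g = eg g * (eg g.r * eg g) := by rw [mul_assoc]
    _ = eg g * (eg g.r * (eg g.c * eg g.l * eg g)) := by rw [step]
    _ = (eg g * eg g.r * eg g.c) * (eg g.l * eg g) := by simp only [mul_assoc]
    _ = eg g * (eg g.l * eg g) := by rw [egL5 g h]
    _ = eg g := by rw [← mul_assoc]; exact egDglg g h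

theorem egDrgl (g : Gx X) (h : 2 ≤ g.ht) :
    eg g.r * eg g * eg g.l = eg g.r * eg g.c * eg g.l := by
  have m : eg g.c * eg g * eg g.c = eg g := by rw [egDcg g h, egDgc g h]
  conv_lhs => rw [← m]
  simp only [← mul_assoc]
  exact egL6 g h

theorem ofL_append {u v : List (Gx X)} (hu : u ≠ []) (hv : v ≠ []) :
    Wd.ofL (u ++ v) = Wd.ofL u * Wd.ofL v := by
  obtain ⟨a, u, rfl⟩ := List.exists_cons_of_ne_nil hu
  obtain ⟨b, v, rfl⟩ := List.exists_cons_of_ne_nil hv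
  rfl

theorem ofL_cons (a : Gx X) {t : List (Gx X)} (ht : t ≠ []) :
    Wd.ofL (a :: t) = Wd.og a * Wd.ofL t :=
  ofL_append (List.cons_ne_nil a []) ht

theorem lamL_ne (g : Gx X) : Gx.lamL g ≠ [] := by
  rw [Gx.lamL]
  split
  · simp
  · split <;> simp

theorem lamR_ne (g : Gx X) : Gx.lamR g ≠ [] := by
  rw [Gx.lamR]
  split
  · simp
  · split <;> simp

theorem lamR_cons (g : Gx X) : ∃ t, Gx.lamR g = g :: t := by
  rw [Gx.lamR]
  split
  · exact ⟨_, rfl⟩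
  · split
    · exact ⟨[], rfl⟩
    · exact ⟨[Gx.gone], rfl⟩

theorem clsLamL (g : Gx X) : cls (Wd.ofL (Gx.lamL g)) = cls (Wd.og g) := by
  rw [Gx.lamL]
  split
  case isTrue h =>
    rw [ofL_append (lamL_ne g.c) (by simp)]
    show cls (Wd.ofL (Gx.lamL g.c)) * (cls (Wd.og g.l) * cls (Wd.og g)) = cls (Wd.og g)
    rw [clsLamL g.c, ← mul_assoc]
    exact egL4 g h
  case isFalse h =>
    split
    · rfl
    · exact egL1 g
termination_by g.ht
decreasing_by exact Gx.ht_c_lt (by assumption)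

theorem clsLamR (g : Gx X) : cls (Wd.ofL (Gx.lamR g)) = cls (Wd.og g) := by
  rw [Gx.lamR]
  split
  case isTrue h =>
    rw [ofL_append (by simp) (lamR_ne g.c)]
    show cls (Wd.og g) * cls (Wd.og g.r) * cls (Wd.ofL (Gx.lamR g.c)) = cls (Wd.og g)
    rw [clsLamR g.c]
    exact egL5 g h
  case isFalse h =>
    split
    · rfl
    · exact egL2 g
termination_by g.ht
decreasing_by exact Gx.ht_c_lt (by assumption)

theorem clsBeta1g (g : Gx X) : cls (Wd.ofL (beta1g g)) = cls (Wd.og g) := by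
  obtain ⟨t, htR⟩ := lamR_cons g
  unfold beta1g mergeL
  rw [htR, List.tail_cons]
  by_cases hte : t = []
  · subst hte
    rw [List.append_nil]
    exact clsLamL g
  · rw [ofL_append (lamL_ne g) hte]
    have h2 : cls (Wd.og g) * cls (Wd.ofL t) = cls (Wd.og g) := by
      have h3 := clsLamR g
      rw [htR, ofL_cons g hte] at h3
      exact h3
    show cls (Wd.ofL (Gx.lamL g)) * cls (Wd.ofL t) = cls (Wd.og g)
    rw [clsLamL g]
    exact h2

end Aux

theorem statement0 {X : Type} [Nonempty X] (g g₁ : Gx X) (hg : 1 < g.ht) :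
    (cls (Wd.og g.c * Wd.og g) = cls (Wd.og g) ∧
     cls (Wd.og g * Wd.og g.c) = cls (Wd.og g) ∧
     cls (Wd.og g * Wd.og g.l * Wd.og g) = cls (Wd.og g) ∧
     cls (Wd.og g * Wd.og g.r * Wd.og g) = cls (Wd.og g) ∧
     cls (Wd.og g.r * Wd.og g * Wd.og g.l) = cls (Wd.og g.r * Wd.og g.c * Wd.og g.l)) ∧
    (cls (Wd.og g * Wd.og g.r) * cls (Wd.og g * Wd.og g.r) = cls (Wd.og g * Wd.og g.r) ∧
     cls (Wd.og g * Wd.og g.l) * cls (Wd.og g * Wd.og g.l) = cls (Wd.og g * Wd.og g.l) ∧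
     cls (Wd.og g.r * Wd.og g) * cls (Wd.og g.r * Wd.og g) = cls (Wd.og g.r * Wd.og g) ∧
     cls (Wd.og g.l * Wd.og g) * cls (Wd.og g.l * Wd.og g) = cls (Wd.og g.l * Wd.og g)) ∧
    cls (Wd.ofL (beta1g g₁)) = cls (Wd.og g₁) := by
  have h2 : 2 ≤ g.ht := hg
  refine ⟨⟨egDcg g h2, egDgc g h2, egDglg g h2, egDgrg g h2, egDrgl g h2⟩, ⟨?_, ?_, ?_, ?_⟩,
    clsBeta1g g₁⟩
  · show (eg g * eg g.r) * (eg g * eg g.r) = eg g * eg g.r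
    calc (eg g * eg g.r) * (eg g * eg g.r) = (eg g * eg g.r * eg g) * eg g.r := by
          simp only [mul_assoc]
      _ = eg g * eg g.r := by rw [egDgrg g h2]
  · show (eg g * eg g.l) * (eg g * eg g.l) = eg g * eg g.l
    calc (eg g * eg g.l) * (eg g * eg g.l) = (eg g * eg g.l * eg g) * eg g.l := by
          simp only [mul_assoc]
      _ = eg g * eg g.l := by rw [egDglg g h2]
  · show (eg g.r * eg g) * (eg g.r * eg g) = eg g.r * eg g
    calc (eg g.r * eg g) * (eg g.r * eg g) = eg g.r * (eg g * eg g.r * eg g) := by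
          simp only [mul_assoc]
      _ = eg g.r * eg g := by rw [egDgrg g h2]
  · show (eg g.l * eg g) * (eg g.l * eg g) = eg g.l * eg g
    calc (eg g.l * eg g) * (eg g.l * eg g) = eg g.l * (eg g * eg g.l * eg g) := by
          simp only [mul_assoc]
      _ = eg g.l * eg g := by rw [egDglg g h2]
end

section
/- For every word u ∈ G(X)^+, β(u) is a mountain and β(u) ≈ u, i.e. [β(u)] = [u] in FT¹(X). -/
namespace Aux
open Gx Wd

variable {X : Type}

/-- height-0 elements are `gone`. -/
theorem ht0_eq_gone (g : Gx X) (h : g.ht = 0) : g = Gx.gone := by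
  rcases g with ⟨g0, hg⟩
  cases hg with
  | one => rfl
  | base x => simp [Gx.ht, PreG.ht] at h
  | node hl hc hr h1 h2 h3 h4 h5 h6 =>
    simp only [Gx.ht, PreG.ht] at h; omega

theorem ht_l_add (g : Gx X) (h : 1 ≤ g.ht) : g.l.ht + 1 = g.ht := by
  rcases g with ⟨g0, hg⟩
  cases hg with
  | one => simp [Gx.ht, PreG.ht] at h
  | base x => simp [Gx.ht, Gx.l, PreG.ht, PreG.left]
  | node hl hc hr h1 h2 h3 h4 h5 h6 =>
    simp [Gx.ht, Gx.l, PreG.ht, PreG.left]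

theorem ht_r_add (g : Gx X) (h : 1 ≤ g.ht) : g.r.ht + 1 = g.ht := by
  rcases g with ⟨g0, hg⟩
  cases hg with
  | one => simp [Gx.ht, PreG.ht] at h
  | base x => simp [Gx.ht, Gx.r, PreG.ht, PreG.right]
  | node hl hc hr h1 h2 h3 h4 h5 h6 =>
    simp only [Gx.ht, Gx.r, PreG.ht, PreG.right]
    omega

theorem ht_c_add (g : Gx X) (h : 2 ≤ g.ht) : g.c.ht + 2 = g.ht := by
  rcases g with ⟨g0, hg⟩
  cases hg with
  | one => simp [Gx.ht, PreG.ht] at h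
  | base x => simp [Gx.ht, PreG.ht] at h
  | node hl hc hr h1 h2 h3 h4 h5 h6 =>
    simp only [Gx.ht, Gx.c, PreG.ht, PreG.center] at *
    omega

theorem c_eq_ll_or_lr (g : Gx X) (h : 2 ≤ g.ht) : g.c = g.l.l ∨ g.c = g.l.r := by
  rcases g with ⟨g0, hg⟩
  cases hg with
  | one => simp [Gx.ht, PreG.ht] at h
  | base x => simp [Gx.ht, PreG.ht] at h
  | node hl hc hr h1 h2 h3 h4 h5 h6 =>
    rcases h5 with h5 | h5
    · exact Or.inl (Subtype.ext h5)
    · exact Or.inr (Subtype.ext h5)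

theorem c_eq_rl_or_rr (g : Gx X) (h : 2 ≤ g.ht) : g.c = g.r.l ∨ g.c = g.r.r := by
  rcases g with ⟨g0, hg⟩
  cases hg with
  | one => simp [Gx.ht, PreG.ht] at h
  | base x => simp [Gx.ht, PreG.ht] at h
  | node hl hc hr h1 h2 h3 h4 h5 h6 =>
    rcases h6 with h6 | h6
    · exact Or.inl (Subtype.ext h6)
    · exact Or.inr (Subtype.ext h6)

/-- The landscape step relation. -/
def lstep (a b : Gx X) : Prop := Gx.stepUp a b ∨ Gx.stepDown a b

theorem stepUp_ht {a b : Gx X} (h : Gx.stepUp a b) : a.ht ≤ b.ht ∧ b.ht ≤ a.ht + 1 := by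
  rcases Nat.eq_zero_or_pos b.ht with h0 | h1
  · have hb := ht0_eq_gone b h0
    subst hb
    rcases h with h | h <;> subst h <;>
      simp [Gx.ht, Gx.l, Gx.r, Gx.gone, PreG.ht, PreG.left, PreG.right]
  · rcases h with h | h
    · subst h; have := ht_l_add b h1; omega
    · subst h; have := ht_r_add b h1; omega

theorem lstep_ht {a b : Gx X} (h : lstep a b) : b.ht ≤ a.ht + 1 ∧ a.ht ≤ b.ht + 1 := by
  rcases h with h | h
  · have := stepUp_ht h; omega
  · have := stepUp_ht (show Gx.stepUp b a from h); omega

/-- at a down step of exact height difference, the lower letter is `a.l` or `a.r`. -/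
theorem down_of_lstep {a b : Gx X} (h : lstep a b) (hht : a.ht = b.ht + 1) :
    b = a.l ∨ b = a.r := by
  rcases h with h | h
  · exfalso; have := stepUp_ht h; omega
  · exact h

theorem up_of_lstep {a b : Gx X} (h : lstep a b) (hht : b.ht = a.ht + 1) :
    a = b.l ∨ a = b.r := by
  rcases h with h | h
  · exact h
  · exfalso
    have := stepUp_ht (show Gx.stepUp b a from h); omega

end Aux
namespace Aux
variable {X : Type}

/-- class of a single letter. -/
def cg (g : Gx X) : FT1 X := cls (Wd.og g)

theorem cls_mul (u v : Wd X) : cls (u * v) = cls u * cls v := rfl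

theorem cls_eq_of_rel {u v : Wd X} (h : ConGen.Rel (rhoBase X) u v) : cls u = cls v :=
  (Con.eq _).2 h

theorem one_mul_g (g : Gx X) : cg Gx.gone * cg g = cg g :=
  cls_eq_of_rel (ConGen.Rel.of _ _ (Or.inl ⟨g, Or.inl ⟨rfl, rfl⟩⟩))

theorem g_mul_one (g : Gx X) : cg g * cg Gx.gone = cg g :=
  cls_eq_of_rel (ConGen.Rel.of _ _ (Or.inl ⟨g, Or.inr (Or.inl ⟨rfl, rfl⟩)⟩))

theorem g_sq (g : Gx X) : cg g * cg g = cg g :=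
  cls_eq_of_rel (ConGen.Rel.of _ _ (Or.inl ⟨g, Or.inr (Or.inr ⟨rfl, rfl⟩)⟩))

theorem rel1 (g : Gx X) (h : 2 ≤ g.ht) : cg g.c * cg g.l * cg g = cg g :=
  cls_eq_of_rel (ConGen.Rel.of _ _ (Or.inr ⟨g, h, Or.inl ⟨rfl, rfl⟩⟩))

theorem rel2 (g : Gx X) (h : 2 ≤ g.ht) : cg g * cg g.r * cg g.c = cg g :=
  cls_eq_of_rel (ConGen.Rel.of _ _ (Or.inr ⟨g, h, Or.inr (Or.inl ⟨rfl, rfl⟩)⟩))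

theorem rel3 (g : Gx X) (h : 2 ≤ g.ht) :
    cg g.r * cg g.c * cg g * cg g.c * cg g.l = cg g.r * cg g.c * cg g.l :=
  cls_eq_of_rel (ConGen.Rel.of _ _ (Or.inr ⟨g, h, Or.inr (Or.inr ⟨rfl, rfl⟩)⟩))

theorem grg (a : Gx X) (h : 2 ≤ a.ht) : cg a * cg a.r * cg a = cg a := by
  calc cg a * cg a.r * cg a
      = cg a * cg a.r * (cg a.c * cg a.l * cg a) := by rw [rel1 a h]
    _ = cg a * (cg a.r * cg a.c * cg a.l) * cg a := by simp only [mul_assoc]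
    _ = cg a * (cg a.r * cg a.c * cg a * cg a.c * cg a.l) * cg a := by rw [rel3 a h]
    _ = (cg a * cg a.r * cg a.c) * (cg a * (cg a.c * cg a.l * cg a)) := by
        simp only [mul_assoc]
    _ = cg a * (cg a * cg a) := by rw [rel2 a h, rel1 a h]
    _ = cg a := by rw [g_sq, g_sq]

theorem glg (a : Gx X) (h : 2 ≤ a.ht) : cg a * cg a.l * cg a = cg a := by
  calc cg a * cg a.l * cg a
      = (cg a * cg a.r * cg a.c) * cg a.l * cg a := by rw [rel2 a h]
    _ = cg a * cg a.r * (cg a.c * cg a.l * cg a) := by simp only [mul_assoc]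
    _ = cg a * cg a.r * cg a := by rw [rel1 a h]
    _ = cg a := grg a h

theorem insert_d (a b c d : Gx X) (hdl : d.l = c) (hdc : d.c = b) (hdr : d.r = a)
    (hht : 2 ≤ d.ht) : cg a * cg b * cg c = cg a * cg d * cg c := by
  have R1 : cg b * cg c * cg d = cg d := by
    have := rel1 d hht; rwa [hdl, hdc] at this
  have R2 : cg d * cg a * cg b = cg d := by
    have := rel2 d hht; rwa [hdc, hdr] at this
  have R3 : cg a * cg b * cg d * cg b * cg c = cg a * cg b * cg c := by
    have := rel3 d hht; rwa [hdl, hdc, hdr] at this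
  have hbd : cg b * cg d = cg d := by
    calc cg b * cg d = cg b * (cg b * cg c * cg d) := by rw [R1]
      _ = cg b * cg b * (cg c * cg d) := by simp only [mul_assoc]
      _ = cg b * (cg c * cg d) := by rw [g_sq]
      _ = cg b * cg c * cg d := by simp only [mul_assoc]
      _ = cg d := R1
  have hdb : cg d * cg b = cg d := by
    calc cg d * cg b = (cg d * cg a * cg b) * cg b := by rw [R2]
      _ = cg d * cg a * (cg b * cg b) := by simp only [mul_assoc]
      _ = cg d * cg a * cg b := by rw [g_sq]
      _ = cg d := R2
  calc cg a * cg b * cg c = cg a * cg b * cg d * cg b * cg c := by rw [R3]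
    _ = cg a * (cg b * cg d) * (cg b * cg c) := by simp only [mul_assoc]
    _ = cg a * cg d * (cg b * cg c) := by rw [hbd]
    _ = cg a * (cg d * cg b) * cg c := by simp only [mul_assoc]
    _ = cg a * cg d * cg c := by rw [hdb]

/-! ### the `wne` interpretation of lists of letters -/

noncomputable def wne (l : List (Gx X)) : FT1 X :=
  l.foldl (fun a g => a * cg g) (cg Gx.gone)

theorem wne_nil : wne ([] : List (Gx X)) = cg Gx.gone := rfl

theorem foldl_mul (m : List (Gx X)) (a b : FT1 X) :
    m.foldl (fun x g => x * cg g) (a * b) = a * m.foldl (fun x g => x * cg g) b := by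
  induction m generalizing b with
  | nil => rfl
  | cons g t ih => simp only [List.foldl_cons, mul_assoc, ih]

theorem wne_cons (g : Gx X) (t : List (Gx X)) : wne (g :: t) = cg g * wne t := by
  show List.foldl _ (cg Gx.gone * cg g) t = _
  rw [one_mul_g]
  conv_lhs => rw [show cg g = cg g * cg Gx.gone from (g_mul_one g).symm]
  rw [foldl_mul]; rfl

theorem e_mul_wne (l : List (Gx X)) : cg Gx.gone * wne l = wne l := by
  induction l with
  | nil => exact one_mul_g Gx.gone
  | cons g t ih => rw [wne_cons, ← mul_assoc, one_mul_g]

theorem wne_append (l m : List (Gx X)) : wne (l ++ m) = wne l * wne m := by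
  induction l with
  | nil => rw [wne_nil, List.nil_append, e_mul_wne]
  | cons g t ih => simp only [List.cons_append, wne_cons, ih, mul_assoc]

end Aux
namespace Aux
variable {X : Type}

theorem getLast?_cons_ne {α : Type*} (a : α) (l : List α) (h : l ≠ []) :
    (a :: l).getLast? = l.getLast? := by
  cases l with
  | nil => exact absurd rfl h
  | cons b t => exact List.getLast?_cons_cons

theorem wne_single (g : Gx X) : wne [g] = cg g := by
  rw [wne_cons, wne_nil, g_mul_one]

theorem wne_pair (g h : Gx X) : wne [g, h] = cg g * cg h := by
  rw [wne_cons, wne_single]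

theorem ofL_cons (g : Gx X) (t : List (Gx X)) (ht : t ≠ []) :
    Wd.ofL (g :: t) = Wd.og g * Wd.ofL t := by
  cases t with
  | nil => exact absurd rfl ht
  | cons h t' => rfl

theorem cls_ofL : ∀ (l : List (Gx X)), l ≠ [] → cls (Wd.ofL l) = wne l := by
  intro l
  induction l with
  | nil => intro h; exact absurd rfl h
  | cons g t ih =>
    intro _
    cases t with
    | nil => rw [wne_single]; rfl
    | cons h t' =>
      rw [ofL_cons g _ (by simp), cls_mul, wne_cons, ih (by simp)]; rfl

theorem ofL_toL (u : Wd X) : Wd.ofL (Wd.toL u) = u := rfl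

/-- Unfolding lemmas for lamL / lamR. -/
theorem lamL_ht0 (g : Gx X) (h : g.ht = 0) : Gx.lamL g = [g] := by
  rw [Gx.lamL]; simp [h]

theorem lamL_ht1 (g : Gx X) (h : g.ht = 1) : Gx.lamL g = [Gx.gone, g] := by
  rw [Gx.lamL]; simp [h]

theorem lamL_ht2 (g : Gx X) (h : 2 ≤ g.ht) : Gx.lamL g = Gx.lamL g.c ++ [g.l, g] := by
  rw [Gx.lamL]; simp [h]

theorem lamR_ht0 (g : Gx X) (h : g.ht = 0) : Gx.lamR g = [g] := by
  rw [Gx.lamR]; simp [h]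

theorem lamR_ht1 (g : Gx X) (h : g.ht = 1) : Gx.lamR g = [g, Gx.gone] := by
  rw [Gx.lamR]; simp [h]

theorem lamR_ht2 (g : Gx X) (h : 2 ≤ g.ht) : Gx.lamR g = [g, g.r] ++ Gx.lamR g.c := by
  rw [Gx.lamR]; simp [h]

theorem lamL_spec : ∀ (n : ℕ) (g : Gx X), g.ht ≤ n →
    Gx.lamL g ≠ [] ∧ (Gx.lamL g).head? = some Gx.gone ∧
    (Gx.lamL g).getLast? = some g ∧ (Gx.lamL g).Chain' Gx.stepUp ∧
    wne (Gx.lamL g) = cg g := by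
  intro n
  induction n with
  | zero =>
    intro g hg
    have h0 : g.ht = 0 := Nat.le_zero.1 hg
    have := ht0_eq_gone g h0
    subst this
    rw [lamL_ht0 _ h0]
    refine ⟨by simp, rfl, rfl, List.IsChain.singleton _, wne_single _⟩
  | succ n ih =>
    intro g hg
    rcases Nat.lt_or_ge g.ht 2 with h2 | h2
    · interval_cases h : g.ht
      · have := ht0_eq_gone g h
        subst this
        rw [lamL_ht0 _ h]
        refine ⟨by simp, rfl, rfl, List.IsChain.singleton _, wne_single _⟩
      · rw [lamL_ht1 _ h]
        have hgl : Gx.gone = g.l := by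
          have h1 := ht_l_add g (by omega)
          have : g.l.ht = 0 := by omega
          exact (ht0_eq_gone _ this).symm
        refine ⟨by simp, rfl, rfl, ?_, ?_⟩
        · exact List.isChain_pair.2 (Or.inl hgl)
        · rw [wne_pair, one_mul_g]
    · have hc : g.c.ht ≤ n := by have := ht_c_add g h2; omega
      obtain ⟨hne, hhd, hlast, hch, hwne⟩ := ih g.c hc
      rw [lamL_ht2 _ h2]
      refine ⟨by simp, ?_, ?_, ?_, ?_⟩
      · rw [List.head?_append_of_ne_nil _ hne, hhd]
      · simp [List.getLast?_append]
      · rw [List.Chain', List.isChain_append]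
        refine ⟨hch, ?_, ?_⟩
        · exact List.isChain_pair.2 (Or.inl rfl)
        · intro x hx y hy
          rw [hlast] at hx
          simp at hx hy
          subst hx; subst hy
          exact c_eq_ll_or_lr g h2
      · rw [wne_append, hwne, wne_pair, ← mul_assoc, rel1 g h2]

theorem lamR_spec : ∀ (n : ℕ) (g : Gx X), g.ht ≤ n →
    Gx.lamR g ≠ [] ∧ (Gx.lamR g).head? = some g ∧
    (Gx.lamR g).getLast? = some Gx.gone ∧ (Gx.lamR g).Chain' Gx.stepDown ∧
    wne (Gx.lamR g) = cg g := by
  intro n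
  induction n with
  | zero =>
    intro g hg
    have h0 : g.ht = 0 := Nat.le_zero.1 hg
    have := ht0_eq_gone g h0
    subst this
    rw [lamR_ht0 _ h0]
    refine ⟨by simp, rfl, rfl, List.IsChain.singleton _, wne_single _⟩
  | succ n ih =>
    intro g hg
    rcases Nat.lt_or_ge g.ht 2 with h2 | h2
    · interval_cases h : g.ht
      · have := ht0_eq_gone g h
        subst this
        rw [lamR_ht0 _ h]
        refine ⟨by simp, rfl, rfl, List.IsChain.singleton _, wne_single _⟩
      · rw [lamR_ht1 _ h]
        have hgl : Gx.gone = g.l := by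
          have h1 := ht_l_add g (by omega)
          have : g.l.ht = 0 := by omega
          exact (ht0_eq_gone _ this).symm
        refine ⟨by simp, rfl, rfl, ?_, ?_⟩
        · exact List.isChain_pair.2 (Or.inl hgl)
        · rw [wne_pair, g_mul_one]
    · have hc : g.c.ht ≤ n := by have := ht_c_add g h2; omega
      obtain ⟨hne, hhd, hlast, hch, hwne⟩ := ih g.c hc
      rw [lamR_ht2 _ h2]
      refine ⟨by simp, rfl, ?_, ?_, ?_⟩
      · show (g :: g.r :: g.c.lamR).getLast? = some Gx.gone
        rw [getLast?_cons_ne _ _ (by simp), getLast?_cons_ne _ _ hne]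
        exact hlast
      · rw [List.Chain', List.isChain_append]
        refine ⟨List.isChain_pair.2 (Or.inr rfl), hch, ?_⟩
        · intro x hx y hy
          simp at hx
          rw [hhd] at hy
          simp at hy
          subst hx; subst hy
          exact c_eq_rl_or_rr g h2
      · rw [wne_append, hwne, wne_pair, rel2 g h2]

end Aux
namespace Aux
variable {X : Type}

/-- merging two landscapes at a common junction letter. -/
theorem merge_facts (u v : List (Gx X)) (x : Gx X)
    (hu : u.Chain' lstep) (hv : v.Chain' lstep) (hune : u ≠ [])
    (hvx : v.head? = some x) (hlast : u.getLast? = some x) :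
    (mergeL u v).Chain' lstep ∧ (mergeL u v).head? = u.head? ∧
    (mergeL u v).getLast? = v.getLast? ∧ mergeL u v ≠ [] ∧
    wne (mergeL u v) = wne u * wne v.tail := by
  have hvc : x :: v.tail = v := List.cons_head?_tail hvx
  refine ⟨?_, ?_, ?_, ?_, ?_⟩
  · rw [mergeL, List.Chain', List.isChain_append]
    refine ⟨hu, ?_, ?_⟩
    · rw [← hvc] at hv
      exact hv.tail
    · intro a ha b hb
      rw [hlast] at ha
      simp at ha; subst ha
      rw [← hvc] at hv
      exact (List.isChain_cons.1 hv).1 b hb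
  · rw [mergeL, List.head?_append_of_ne_nil _ hune]
  · rw [mergeL]
    cases htail : v.tail with
    | nil =>
      rw [← hvc, htail]
      simpa using hlast
    | cons y t =>
      have h1 : v.getLast? = (y :: t).getLast? := by
        rw [← hvc, htail]; exact List.getLast?_cons_cons
      obtain ⟨z, hz⟩ := Option.isSome_iff_exists.1
        (List.getLast?_isSome.2 (by simp) : (y :: t).getLast?.isSome)
      rw [List.getLast?_append, hz, h1, hz]; rfl
  · rw [mergeL]; simp [hune]
  · rw [mergeL, wne_append]

theorem beta1g_spec (g : Gx X) :
    (beta1g g).Chain' lstep ∧ (beta1g g).head? = some Gx.gone ∧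
    (beta1g g).getLast? = some Gx.gone ∧ beta1g g ≠ [] ∧
    wne (beta1g g) = cg g := by
  obtain ⟨hLne, hLhd, hLlast, hLch, hLw⟩ := lamL_spec g.ht g le_rfl
  obtain ⟨hRne, hRhd, hRlast, hRch, hRw⟩ := lamR_spec g.ht g le_rfl
  obtain ⟨hch, hhd, hlast, hne, hw⟩ := merge_facts (Gx.lamL g) (Gx.lamR g) g
    (hLch.imp fun _ _ h => Or.inl h) (hRch.imp fun _ _ h => Or.inr h)
    hLne hRhd hLlast
  rw [beta1g]
  refine ⟨hch, by rw [hhd, hLhd], by rw [hlast, hRlast], hne, ?_⟩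
  rw [hw, hLw]
  have : wne (Gx.lamR g) = cg g * wne (Gx.lamR g).tail := by
    rw [← wne_cons, List.cons_head?_tail hRhd]
  rw [← this, hRw]

theorem beta1L_cons (g : Gx X) (t : List (Gx X)) (ht : t ≠ []) :
    beta1L (g :: t) = mergeL (beta1g g) (beta1L t) := by
  cases t with
  | nil => exact absurd rfl ht
  | cons h t' => rfl

theorem beta1L_spec : ∀ (l : List (Gx X)), l ≠ [] →
    (beta1L l).Chain' lstep ∧ (beta1L l).head? = some Gx.gone ∧
    (beta1L l).getLast? = some Gx.gone ∧ beta1L l ≠ [] ∧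
    wne (beta1L l) = wne l := by
  intro l
  induction l with
  | nil => intro h; exact absurd rfl h
  | cons g t ih =>
    intro _
    cases t with
    | nil =>
      obtain ⟨h1, h2, h3, h4, h5⟩ := beta1g_spec g
      exact ⟨h1, h2, h3, h4, by rw [show beta1L [g] = beta1g g from rfl, h5, wne_single]⟩
    | cons h t' =>
      obtain ⟨ih1, ih2, ih3, ih4, ih5⟩ := ih (by simp)
      obtain ⟨hg1, hg2, hg3, hg4, hg5⟩ := beta1g_spec g
      rw [beta1L_cons g _ (by simp)]
      obtain ⟨m1, m2, m3, m4, m5⟩ := merge_facts (beta1g g) (beta1L (h :: t'))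
        Gx.gone hg1 ih1 hg4 ih2 hg3
      refine ⟨m1, by rw [m2, hg2], by rw [m3, ih3], m4, ?_⟩
      have htl : wne (beta1L (h :: t')) = wne (beta1L (h :: t')).tail := by
        conv_lhs => rw [← List.cons_head?_tail ih2, wne_cons, e_mul_wne]
      rw [m5, hg5, ← htl, ih5]
      simp [wne_cons, mul_assoc]
end Aux
namespace Aux
variable {X : Type}

theorem wne_triple (a b c : Gx X) : wne [a, b, c] = cg a * cg b * cg c := by
  rw [wne_cons, wne_pair, ← mul_assoc]

theorem getLast?_append_ne {α : Type*} {l l' : List α} (h : l' ≠ []) :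
    (l ++ l').getLast? = l'.getLast? := by
  obtain ⟨z, hz⟩ := Option.isSome_iff_exists.1 (List.getLast?_isSome.2 h)
  rw [List.getLast?_append, hz]; rfl

theorem ht_le_aux : ∀ (p : List (Gx X)) (g x : Gx X) (s : List (Gx X)),
    List.Chain' lstep (g :: (p ++ x :: s)) → x.ht ≤ g.ht + p.length + 1 := by
  intro p
  induction p with
  | nil =>
    intro g x s hch
    have := (List.isChain_cons_cons.1 hch).1
    have := lstep_ht this
    simpa using this.1
  | cons h p' ih =>
    intro g x s hch
    rw [List.cons_append, List.Chain', List.isChain_cons_cons] at hch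
    have h1 := lstep_ht hch.1
    have h2 := ih h x s hch.2
    simp only [List.length_cons]
    omega

theorem ht_le (p : List (Gx X)) (x : Gx X) (s : List (Gx X))
    (hch : List.Chain' lstep (p ++ x :: s))
    (hhd : (p ++ x :: s).head? = some Gx.gone) : x.ht ≤ p.length := by
  cases p with
  | nil =>
    simp at hhd
    subst hhd
    simp [Gx.ht, Gx.gone, PreG.ht]
  | cons h p' =>
    simp at hhd
    subst hhd
    have := ht_le_aux p' Gx.gone x s hch
    have h0 : (Gx.gone : Gx X).ht = 0 := rfl
    simp only [List.length_cons]
    omega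

/-- decompose a non-river-free word. -/
theorem rf_dec : ∀ (w : List (Gx X)), RiverFreeL w ∨
    ∃ (p : List (Gx X)) (a b c : Gx X) (s : List (Gx X)),
      w = p ++ a :: b :: c :: s ∧ a.ht = b.ht + 1 ∧ c.ht = b.ht + 1 := by
  intro w
  induction w with
  | nil => left; trivial
  | cons a t ih =>
    cases t with
    | nil => left; trivial
    | cons b t' =>
      cases t' with
      | nil => left; trivial
      | cons c s =>
        rcases ih with hrf | ⟨p, a', b', c', s', heq, h1, h2⟩
        · by_cases hr : a.ht = b.ht + 1 ∧ c.ht = b.ht + 1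
          · exact Or.inr ⟨[], a, b, c, s, rfl, hr.1, hr.2⟩
          · exact Or.inl ⟨hr, hrf⟩
        · exact Or.inr ⟨a :: p, a', b', c', s', by rw [List.cons_append, heq], h1, h2⟩

theorem step_exists (w : List (Gx X)) (hch : List.Chain' lstep w)
    (hrf : ¬RiverFreeL w) : ∃ v, UpStep w v := by
  rcases rf_dec w with h | ⟨p, a, b, c, s, heq, h1, h2⟩
  · exact absurd h hrf
  subst heq
  by_cases hac : a = c
  · exact ⟨p ++ a :: s, p, s, a, b, c, rfl, h1, h2, Or.inl ⟨hac, rfl⟩⟩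
  · have hmid : List.Chain' lstep (a :: b :: c :: s) := (List.isChain_append.1 hch).2.1
    have hab : lstep a b := (List.isChain_cons_cons.1 hmid).1
    have hbc : lstep b c := (List.isChain_cons_cons.1 (List.isChain_cons_cons.1 hmid).2).1
    have hba : b = a.l ∨ b = a.r := down_of_lstep hab h1
    have hbc' : b = c.l ∨ b = c.r := up_of_lstep hbc h2
    have hIsG : PreG.IsG (PreG.node c.1 b.1 a.1) := by
      refine PreG.IsG.node c.2 b.2 a.2 ?_ ?_ ?_ ?_ ?_ ?_
      · show 1 ≤ Gx.ht c; omega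
      · show Gx.ht c = Gx.ht a; omega
      · show Gx.ht b + 1 = Gx.ht c; omega
      · exact fun h => hac (Subtype.ext h.symm)
      · rcases hbc' with h | h
        · exact Or.inl (congrArg Subtype.val h)
        · exact Or.inr (congrArg Subtype.val h)
      · rcases hba with h | h
        · exact Or.inl (congrArg Subtype.val h)
        · exact Or.inr (congrArg Subtype.val h)
    exact ⟨p ++ a :: ⟨_, hIsG⟩ :: c :: s, p, s, a, b, c, rfl, h1, h2,
      Or.inr ⟨hac, ⟨_, hIsG⟩, rfl, rfl⟩⟩

/-- the termination measure. -/
def mes (N : ℕ) (l : List (Gx X)) : ℕ := (l.map fun g => N - g.ht).sum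

theorem mes_append (N : ℕ) (l m : List (Gx X)) :
    mes N (l ++ m) = mes N l + mes N m := by simp [mes]

end Aux
namespace Aux
variable {X : Type}

theorem mes_nil (N : ℕ) : mes N ([] : List (Gx X)) = 0 := rfl

theorem mes_cons (N : ℕ) (g : Gx X) (l : List (Gx X)) :
    mes N (g :: l) = (N - g.ht) + mes N l := by simp [mes]

theorem step_preserve {w v : List (Gx X)} (hch : List.Chain' lstep w)
    (hhd : w.head? = some Gx.gone) (hup : UpStep w v) :
    List.Chain' lstep v ∧ v.head? = w.head? ∧ v.getLast? = w.getLast? ∧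
    wne v = wne w ∧ v.length ≤ w.length ∧
    ∀ N, w.length ≤ N → mes N v < mes N w := by
  obtain ⟨p, s, a, b, c, heq, h1, h2, hcase⟩ := hup
  subst heq
  obtain ⟨hp, hmid, hjun⟩ := List.isChain_append.1 hch
  have hbht : b.ht ≤ p.length + 1 := by
    have hch' : List.Chain' lstep ((p ++ [a]) ++ b :: c :: s) := by
      rw [List.append_assoc]; exact hch
    have hhd' : ((p ++ [a]) ++ b :: c :: s).head? = some Gx.gone := by
      rw [List.append_assoc]; exact hhd
    have := ht_le (p ++ [a]) b (c :: s) hch' hhd'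
    simpa using this
  rcases hcase with ⟨hac, hveq⟩ | ⟨hac, d, hd, hveq⟩
  · subst hveq; subst hac
    have hmidw : wne [a, b, a] = wne [a] := by
      rcases Nat.lt_or_ge a.ht 2 with hlt | hge
      · have hb0 : b.ht = 0 := by omega
        rw [ht0_eq_gone b hb0, wne_triple, wne_single, g_mul_one, g_sq]
      · have hab : lstep a b := (List.isChain_cons_cons.1 hmid).1
        rcases down_of_lstep hab h1 with hb | hb <;> subst hb <;>
          rw [wne_triple, wne_single]
        · exact glg a hge
        · exact grg a hge
    refine ⟨?_, ?_, ?_, ?_, ?_, ?_⟩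
    · refine List.isChain_append.2 ⟨hp, hmid.tail.tail, ?_⟩
      intro x hx y hy
      simp at hy; subst hy
      exact hjun x hx a rfl
    · cases p <;> rfl
    · rw [getLast?_append_ne (l := p) (by simp), getLast?_append_ne (l := p) (by simp)]
      cases s with
      | nil => simp [List.getLast?_cons_cons]
      | cons z s' => simp [List.getLast?_cons_cons]
    · rw [show p ++ a :: s = p ++ ([a] ++ s) from rfl, wne_append, wne_append,
        show p ++ a :: b :: a :: s = p ++ ([a, b, a] ++ s) from rfl, wne_append, wne_append,
        hmidw]
    · simp only [List.length_append, List.length_cons]; omega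
    · intro N hN
      simp only [List.length_append, List.length_cons] at hN
      rw [show p ++ a :: s = p ++ ([a] ++ s) from rfl, mes_append, mes_append,
        show p ++ a :: b :: a :: s = p ++ ([a, b, a] ++ s) from rfl, mes_append, mes_append,
        mes_cons, mes_cons, mes_cons, mes_cons, mes_nil]
      omega
  · subst hveq
    have hdl : d.l = c := Subtype.ext (by show d.1.left = c.1; rw [hd]; rfl)
    have hdc : d.c = b := Subtype.ext (by show d.1.center = b.1; rw [hd]; rfl)
    have hdr : d.r = a := Subtype.ext (by show d.1.right = a.1; rw [hd]; rfl)
    have hdht : d.ht = b.ht + 2 := by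
      show d.1.ht = b.ht + 2
      rw [hd]
      show c.1.ht + 1 = b.ht + 2
      show Gx.ht c + 1 = b.ht + 2
      omega
    have hmidw : wne [a, d, c] = wne [a, b, c] := by
      rw [wne_triple, wne_triple, insert_d a b c d hdl hdc hdr (by omega)]
    refine ⟨?_, ?_, ?_, ?_, ?_, ?_⟩
    · refine List.isChain_append.2 ⟨hp, ?_, ?_⟩
      · exact List.isChain_cons_cons.2 ⟨Or.inl (Or.inr hdr.symm),
          List.isChain_cons_cons.2 ⟨Or.inr (Or.inl hdl.symm), hmid.tail.tail⟩⟩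
      · intro x hx y hy
        simp at hy; subst hy
        exact hjun x hx a rfl
    · cases p <;> rfl
    · rw [getLast?_append_ne (l := p) (by simp), getLast?_append_ne (l := p) (by simp)]
      simp [List.getLast?_cons_cons]
    · rw [show p ++ a :: d :: c :: s = p ++ ([a, d, c] ++ s) from rfl, wne_append, wne_append,
        show p ++ a :: b :: c :: s = p ++ ([a, b, c] ++ s) from rfl, wne_append, wne_append,
        hmidw]
    · simp only [List.length_append, List.length_cons]; omega
    · intro N hN
      simp only [List.length_append, List.length_cons] at hN
      rw [show p ++ a :: d :: c :: s = p ++ ([a, d, c] ++ s) from rfl, mes_append, mes_append,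
        show p ++ a :: b :: c :: s = p ++ ([a, b, c] ++ s) from rfl, mes_append, mes_append,
        mes_cons, mes_cons, mes_cons, mes_cons, mes_cons, mes_cons, mes_nil]
      omega
end Aux
namespace Aux
variable {X : Type}

theorem ne_nil_of_head? {α : Type*} {l : List α} {a : α} (h : l.head? = some a) : l ≠ [] := by
  intro hnil; rw [hnil] at h; cases h

theorem exists_run (N : ℕ) : ∀ (k : ℕ) (w : List (Gx X)), List.Chain' lstep w →
    w.head? = some Gx.gone → w.length ≤ N → mes N w ≤ k →
    ∃ v, UpStar w v ∧ RiverFreeL v ∧ IsLandL v := by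
  intro k
  induction k with
  | zero =>
    intro w hch hhd hlen hmes
    by_cases hrf : RiverFreeL w
    · exact ⟨w, Relation.ReflTransGen.refl, hrf, ⟨ne_nil_of_head? hhd, hch⟩⟩
    · obtain ⟨v', hst⟩ := step_exists w hch hrf
      obtain ⟨_, _, _, _, _, hmes'⟩ := step_preserve hch hhd hst
      have := hmes' N hlen
      omega
  | succ k ih =>
    intro w hch hhd hlen hmes
    by_cases hrf : RiverFreeL w
    · exact ⟨w, Relation.ReflTransGen.refl, hrf, ⟨ne_nil_of_head? hhd, hch⟩⟩
    · obtain ⟨v', hst⟩ := step_exists w hch hrf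
      obtain ⟨hch', hhd', _, _, hlen', hmes'⟩ := step_preserve hch hhd hst
      obtain ⟨v, hv1, hv2, hv3⟩ := ih v' hch' (by rw [hhd']; exact hhd)
        (le_trans hlen' hlen) (by have := hmes' N hlen; omega)
      exact ⟨v, Relation.ReflTransGen.head hst hv1, hv2, hv3⟩

theorem star_preserve {w v : List (Gx X)} (h : UpStar w v)
    (hch : List.Chain' lstep w) (hhd : w.head? = some Gx.gone) :
    List.Chain' lstep v ∧ v.head? = w.head? ∧ v.getLast? = w.getLast? ∧
    wne v = wne w := by
  induction h with
  | refl => exact ⟨hch, rfl, rfl, rfl⟩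
  | tail h1 h2 ih =>
    obtain ⟨ich, ihd, ilast, iwne⟩ := ih
    obtain ⟨sch, shd, slast, swne, _, _⟩ := step_preserve ich (by rw [ihd]; exact hhd) h2
    exact ⟨sch, by rw [shd, ihd], by rw [slast, ilast], by rw [swne, iwne]⟩

theorem main {X : Type} (u : Wd X) :
    IsMountainL (betaL (Wd.toL u)) ∧ cls (Wd.ofL (betaL (Wd.toL u))) = cls u := by
  have hlne : Wd.toL u ≠ [] := by simp [Wd.toL]
  obtain ⟨hch, hhd, hlast, hne, hwne⟩ := beta1L_spec (Wd.toL u) hlne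
  have hex : ∃ v, UpStar (beta1L (Wd.toL u)) v ∧ RiverFreeL v ∧ IsLandL v :=
    exists_run (beta1L (Wd.toL u)).length (mes (beta1L (Wd.toL u)).length (beta1L (Wd.toL u)))
      (beta1L (Wd.toL u)) hch hhd le_rfl le_rfl
  have hbeq : betaL (Wd.toL u) = hex.choose := by
    unfold betaL beta2L
    rw [dif_pos hex]
  obtain ⟨hstar, hrf, hland⟩ := hex.choose_spec
  obtain ⟨vch, vhd, vlast, vwne⟩ := star_preserve hstar hch hhd
  rw [hbeq]
  refine ⟨⟨hland, by rw [vhd]; exact hhd, by rw [vlast]; exact hlast, hrf⟩, ?_⟩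
  rw [cls_ofL _ hland.1, vwne, hwne, ← cls_ofL _ hlne, ofL_toL]

end Aux

theorem statement1 {X : Type} [Nonempty X] (u : Wd X) :
    IsMountainL (betaL (Wd.toL u)) ∧ cls (Wd.ofL (betaL (Wd.toL u))) = cls u :=
  Aux.main u
end

section
/- Let g, h ∈ G(X). Then: (i) h ∈ ε(g) if and only if ε(h) ⊆ ε(g); (ii) if h ∈ ε(g) ∖ {g}, then there exists an uphill u = g_0⋯g_n with n = ⋏(g) − ⋏(h), g_i ∈ ε(g) for all 0 ≤ i ≤ n, g_0 = h and g_n = g. -/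
section Statement6Aux

variable {X : Type}

theorem PreG.mem_ground_self (g : PreG X) : g ∈ PreG.ground g := by
  cases g with
  | one => simp [PreG.ground]
  | base x => simp [PreG.ground]
  | node l c r => simp [PreG.ground]

theorem PreG.ht_le_of_mem_ground {g : PreG X} (hg : g.IsG) :
    ∀ h ∈ PreG.ground g, h.ht ≤ g.ht := by
  induction hg with
  | one => intro h hm; simp [PreG.ground] at hm; subst hm; rfl
  | base x =>
    intro h hm
    simp [PreG.ground] at hm
    rcases hm with hm | hm <;> subst hm <;> simp [PreG.ht]
  | @node l c r hl hc hr h1 h2 h3 h4 h5 h6 ihl ihc ihr =>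
    intro h hm
    rcases hm with (hm | hm) | hm
    · exact le_trans (ihl h hm) (by simp [PreG.ht])
    · simp at hm; subst hm; rfl
    · refine le_trans (ihr h hm) ?_
      simp [PreG.ht]; omega

theorem PreG.ground_subset_of_mem {h g : PreG X} (hm : h ∈ PreG.ground g) :
    PreG.ground h ⊆ PreG.ground g := by
  induction g with
  | one => simp [PreG.ground] at hm; subst hm; exact le_refl _
  | base x =>
    simp [PreG.ground] at hm
    rcases hm with hm | hm <;> subst hm
    · intro a ha; simp [PreG.ground] at ha ⊢; tauto
    · exact le_refl _
  | node l c r ihl ihc ihr =>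
    rcases hm with (hm | hm) | hm
    · exact subset_trans (ihl hm) (by intro a ha; exact Or.inl (Or.inl ha))
    · simp at hm; subst hm; exact le_refl _
    · exact subset_trans (ihr hm) (by intro a ha; exact Or.inr ha)

theorem PreG.ht_node (l c r : PreG X) : (PreG.node l c r).ht = l.ht + 1 := rfl

theorem Gx.uphill_aux {g0 : PreG X} (hg : g0.IsG) :
    ∀ h : Gx X, h.1 ∈ PreG.ground g0 → h.1 ≠ g0 →
      ∃ w : List (Gx X), IsUphillL w ∧ w.length = g0.ht - h.1.ht + 1 ∧
        (∀ a ∈ w, a.1 ∈ PreG.ground g0) ∧ w.head? = some h ∧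
        w.getLast? = some ⟨g0, hg⟩ := by
  induction hg with
  | one =>
    intro h hm hne
    simp [PreG.ground] at hm
    exact absurd hm hne
  | base x =>
    intro h hm hne
    simp [PreG.ground] at hm
    rcases hm with hm | hm
    · refine ⟨[h, ⟨PreG.base x, .base x⟩], ⟨by simp, ?_⟩, ?_, ?_, rfl, rfl⟩
      · refine List.IsChain.cons_cons ?_ (List.isChain_singleton _)
        left
        exact Subtype.ext hm
      · simp [PreG.ht, hm]; rfl
      · intro a ha
        replace ha : a = h ∨ a = (⟨PreG.base x, .base x⟩ : Gx X) := by
          rcases List.mem_cons.1 ha with e | e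
          · exact Or.inl e
          · exact Or.inr (List.mem_singleton.1 e)
        rcases ha with ha | ha <;> subst ha <;> simp [PreG.ground, hm]
    · exact absurd hm hne
  | @node l c r hl hc hr h1 h2 h3 h4 h5 h6 ihl ihc ihr =>
    intro h hm hne
    have hgG : PreG.IsG (PreG.node l c r) := .node hl hc hr h1 h2 h3 h4 h5 h6
    set G : Gx X := ⟨PreG.node l c r, hgG⟩ with hG
    have hGl : G.l = ⟨l, hl⟩ := rfl
    have hGr : G.r = ⟨r, hr⟩ := rfl
    rcases hm with (hm | hm) | hm
    · -- h ∈ ground l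
      by_cases hhl : h.1 = l
      · refine ⟨[h, G], ⟨by simp, ?_⟩, ?_, ?_, rfl, rfl⟩
        · refine List.IsChain.cons_cons ?_ (List.isChain_singleton _)
          left; exact Subtype.ext hhl
        · simp [PreG.ht_node, hhl]
        · intro a ha; simp at ha
          rcases ha with ha | ha <;> subst ha
          · exact Or.inl (Or.inl hm)
          · exact Or.inl (Or.inr rfl)
      · obtain ⟨w, ⟨hwne, hwc⟩, hlen, hmem, hhd, hlast⟩ := ihl h hm hhl
        refine ⟨w ++ [G], ⟨by simp [hwne], ?_⟩, ?_, ?_, ?_, by simp⟩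
        · refine List.isChain_append.mpr ?_
          refine ⟨hwc, by simp, ?_⟩
          intro x hx y hy
          simp at hy; subst hy
          rw [hlast] at hx; replace hx := Option.some.inj hx; subst hx
          left; exact hGl.symm
        · have := PreG.ht_le_of_mem_ground hl h.1 hm
          simp [hlen, PreG.ht_node]; omega
        · intro a ha
          simp at ha
          rcases ha with ha | ha
          · exact Or.inl (Or.inl (hmem a ha))
          · subst ha; exact Or.inl (Or.inr rfl)
        · rw [List.head?_append, hhd]; rfl
    · simp at hm; exact absurd hm hne
    · -- h ∈ ground r
      by_cases hhr : h.1 = r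
      · refine ⟨[h, G], ⟨by simp, ?_⟩, ?_, ?_, rfl, rfl⟩
        · refine List.IsChain.cons_cons ?_ (List.isChain_singleton _)
          right; exact Subtype.ext hhr
        · simp [PreG.ht_node, hhr]; omega
        · intro a ha; simp at ha
          rcases ha with ha | ha <;> subst ha
          · exact Or.inr hm
          · exact Or.inl (Or.inr rfl)
      · obtain ⟨w, ⟨hwne, hwc⟩, hlen, hmem, hhd, hlast⟩ := ihr h hm hhr
        refine ⟨w ++ [G], ⟨by simp [hwne], ?_⟩, ?_, ?_, ?_, by simp⟩
        · refine List.isChain_append.mpr ?_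
          refine ⟨hwc, by simp, ?_⟩
          intro x hx y hy
          simp at hy; subst hy
          rw [hlast] at hx; replace hx := Option.some.inj hx; subst hx
          right; exact hGr.symm
        · have := PreG.ht_le_of_mem_ground hr h.1 hm
          simp [hlen, PreG.ht_node]; omega
        · intro a ha
          simp at ha
          rcases ha with ha | ha
          · exact Or.inr (hmem a ha)
          · subst ha; exact Or.inl (Or.inr rfl)
        · rw [List.head?_append, hhd]; rfl

end Statement6Aux

theorem statement6 {X : Type} [Nonempty X] (g h : Gx X) :
    (h.1 ∈ PreG.ground g.1 ↔ PreG.ground h.1 ⊆ PreG.ground g.1) ∧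
    (h.1 ∈ PreG.ground g.1 → h ≠ g →
      ∃ w : List (Gx X), IsUphillL w ∧ w.length = g.ht - h.ht + 1 ∧
        (∀ a ∈ w, a.1 ∈ PreG.ground g.1) ∧ w.head? = some h ∧ w.getLast? = some g) := by

  constructor
  · exact ⟨fun hm => PreG.ground_subset_of_mem hm, fun hs => hs (PreG.mem_ground_self h.1)⟩
  · intro hm hne
    obtain ⟨w, hw1, hw2, hw3, hw4, hw5⟩ :=
      Gx.uphill_aux g.2 h hm (fun e => hne (Subtype.ext e))
    exact ⟨w, hw1, hw2, hw3, hw4, hw5⟩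
end
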